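/- arXiv:2301.00642 — 2 statements merged into one kernel-verified Lean document; each statement's English description precedes it below -/
import Mathlib

section
/- For a polynomial p with real coefficients all of whose roots are real (multiplicities allowed), Laguerre's inequality holds weakly: p''(z)·p(z) − p'(z)² ≤ 0 for all real z. -/
open Polynomial

lemma laguerre_aux (s : Multiset ℝ) (c : ℝ) :
    ∀ z : ℝ,
      (derivative (derivative (C c * (s.map fun a => X - C a).prod))).eval z *
          (C c * (s.map fun a => X - C a).prod).eval z -
        ((derivative (C c * (s.map fun a => X - C a).prod)).eval z) ^ 2 ≤ 0 := by
  induction s using Multiset.induction with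
  | empty => simp
  | cons a s ih =>
    intro z
    have key : C c * ((a ::ₘ s).map fun a => X - C a).prod =
        (X - C a) * (C c * (s.map fun a => X - C a).prod) := by
      rw [Multiset.map_cons, Multiset.prod_cons]; ring
    set q := C c * (s.map fun a => X - C a).prod with hq
    clear_value q
    rw [key]
    have h1 : derivative ((X - C a) * q) = q + (X - C a) * derivative q := by
      rw [derivative_mul, derivative_sub, derivative_X, derivative_C]; ring
    have h2 : derivative (derivative ((X - C a) * q)) =
        2 * derivative q + (X - C a) * derivative (derivative q) := by
      rw [h1, derivative_add, derivative_mul, derivative_sub, derivative_X, derivative_C]; ring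
    have this := ih z
    rw [h2, h1]
    simp only [eval_add, eval_mul, eval_sub, eval_X, eval_C, eval_ofNat, eval_pow]
    nlinarith [sq_nonneg (q.eval z), sq_nonneg ((z - a) * (derivative q).eval z),
      sq_nonneg (z - a), mul_nonneg (sq_nonneg (z - a)) (neg_nonneg.2 this)]

/-- Laguerre's inequality (weak version): for a nonzero real polynomial all of whose
roots are real (with multiplicity), `p''(z) * p(z) - p'(z)^2 ≤ 0` for every real `z`. -/
theorem laguerre_inequality_weak (p : Polynomial ℝ)
    (hp : p ≠ 0)
    (hsplit : p.roots.card = p.natDegree) :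
    ∀ z : ℝ,
      (derivative (derivative p)).eval z * p.eval z - ((derivative p).eval z) ^ 2 ≤ 0 := by
  have h := C_leadingCoeff_mul_prod_multiset_X_sub_C hsplit
  intro z
  have := laguerre_aux p.roots p.leadingCoeff z
  rwa [h] at this
end

section
/- For the generalized Laguerre polynomial L_n(x,z) and any k ≤ n, the k-th partial derivative with respect to the parameter, ∂_z^k L_n(x,z), is a polynomial of degree exactly n − k in x; and ∂_z^k L_n(x,z) = 0 identically when k > n. -/
open Polynomial Finset

/-- The generalized Laguerre polynomial as a bivariate polynomial: the outer variable is
the parameter z, the inner coefficients are polynomials in x. -/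
noncomputable def laguerreBiv (n : Nat) : Polynomial (Polynomial Real) :=
  Finset.sum (Finset.range (n + 1)) fun k =>
    Polynomial.C (Polynomial.C ((-1 : Real) ^ k / ((k.factorial : Real) * ((n - k).factorial : Real))) *
        Polynomial.X ^ k) *
      Finset.prod (Finset.Icc (k + 1) n) fun j =>
        (Polynomial.X + Polynomial.C (Polynomial.C (j : Real)))

/-- The k-th derivative in the parameter z of the Laguerre polynomial, specialized at a
real value z, as a polynomial in x. -/
noncomputable def laguerreDz (n k : Nat) (z : Real) : Polynomial Real :=
  (Polynomial.derivative^[k] (laguerreBiv n)).eval (Polynomial.C z)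

noncomputable def lagP (n i : ℕ) : Polynomial ℝ :=
  ∏ j ∈ Finset.Icc (i + 1) n, (Polynomial.X + Polynomial.C (j : ℝ))

lemma lagP_monic (n i : ℕ) : (lagP n i).Monic :=
  monic_prod_of_monic _ _ fun _ _ => monic_X_add_C _

lemma lagP_natDegree (n i : ℕ) : (lagP n i).natDegree = n - i := by
  rw [lagP, natDegree_prod_of_monic (Finset.Icc (i+1) n) (fun j => Polynomial.X + Polynomial.C (j:ℝ)) (fun j _ => monic_X_add_C ((j:ℝ)))]
  have h : ∀ x ∈ Finset.Icc (i+1) n, (Polynomial.X + Polynomial.C (x:ℝ)).natDegree = 1 :=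
    fun x _ => natDegree_X_add_C _
  rw [Finset.sum_congr rfl h, Finset.sum_const, smul_eq_mul, mul_one, Nat.card_Icc]
  omega

lemma eval_C_map (q : Polynomial ℝ) (z : ℝ) :
    (q.map (Polynomial.C : ℝ →+* Polynomial ℝ)).eval (Polynomial.C z) = Polynomial.C (q.eval z) := by
  rw [eval_map]
  have := Polynomial.hom_eval₂ q (RingHom.id ℝ) (Polynomial.C : ℝ →+* Polynomial ℝ) z
  simpa using this.symm

lemma lagP_map (n i : ℕ) :
    (∏ j ∈ Finset.Icc (i + 1) n, (Polynomial.X + Polynomial.C (Polynomial.C (j : ℝ))))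
      = (lagP n i).map (Polynomial.C : ℝ →+* Polynomial ℝ) := by
  simp [lagP, Polynomial.map_prod]

lemma laguerreDz_eq (n k : ℕ) (z : ℝ) :
    laguerreDz n k z = ∑ i ∈ Finset.range (n+1),
      Polynomial.C ((-1:ℝ)^i / (i.factorial * (n-i).factorial)
          * ((Polynomial.derivative^[k] (lagP n i)).eval z)) * Polynomial.X ^ i := by
  unfold laguerreDz laguerreBiv
  rw [iterate_derivative_sum, eval_finset_sum]
  refine Finset.sum_congr rfl fun i _ => ?_
  rw [lagP_map, iterate_derivative_C_mul, iterate_derivative_map, eval_mul, eval_C, eval_C_map,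
    Polynomial.C_mul]
  ring

lemma laguerreDz_coeff (n k m : ℕ) (z : ℝ) :
    (laguerreDz n k z).coeff m =
      if m ≤ n then (-1:ℝ)^m / (m.factorial * (n-m).factorial)
          * ((Polynomial.derivative^[k] (lagP n m)).eval z) else 0 := by
  rw [laguerreDz_eq, finset_sum_coeff]
  simp only [coeff_C_mul, coeff_X_pow, mul_ite, mul_one, mul_zero]
  rw [Finset.sum_ite_eq (Finset.range (n+1)) m]
  simp [Nat.lt_succ_iff]


/-- For k <= n, the k-th z-derivative of L_n is of degree exactly n - k in x (for every
value of the parameter z), and it vanishes identically for k > n. -/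
theorem laguerreDz_degree (n k : Nat) :
    (k ≤ n → ∀ z : Real, laguerreDz n k z ≠ 0 ∧ (laguerreDz n k z).natDegree = n - k) ∧
    (n < k → Polynomial.derivative^[k] (laguerreBiv n) = 0) := by
  constructor
  · intro hk z
    -- leading coefficient value
    have hval : (Polynomial.derivative^[k] (lagP n (n-k))).eval z = (k.factorial : ℝ) := by
      have hdeg : (lagP n (n-k)).natDegree = k := by rw [lagP_natDegree]; omega
      have h0 : (Polynomial.derivative^[k] (lagP n (n-k))).natDegree ≤ 0 := by
        refine (natDegree_iterate_derivative _ _).trans ?_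
        omega
      rw [Polynomial.eq_C_of_natDegree_le_zero h0, eval_C, coeff_iterate_derivative]
      have : (lagP n (n-k)).coeff (0 + k) = 1 := by
        have hm := lagP_monic n (n-k)
        rw [Monic, Polynomial.leadingCoeff, hdeg] at hm
        simpa using hm
      rw [this]
      simp [Nat.descFactorial_self]
    have hcoeff : (laguerreDz n k z).coeff (n-k) ≠ 0 := by
      rw [laguerreDz_coeff, if_pos (by omega : n - k ≤ n), hval]
      have h1 : ((n-k).factorial : ℝ) ≠ 0 := Nat.cast_ne_zero.mpr (Nat.factorial_ne_zero _)
      have h2 : ((n-(n-k)).factorial : ℝ) ≠ 0 := Nat.cast_ne_zero.mpr (Nat.factorial_ne_zero _)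
      have h3 : ((k.factorial : ℝ)) ≠ 0 := Nat.cast_ne_zero.mpr (Nat.factorial_ne_zero _)
      have h4 : ((-1:ℝ))^(n-k) ≠ 0 := pow_ne_zero _ (by norm_num)
      positivity
    have hzero : ∀ m, n - k < m → (laguerreDz n k z).coeff m = 0 := by
      intro m hm
      rw [laguerreDz_coeff]
      split_ifs with h
      · have : (lagP n m).natDegree < k := by rw [lagP_natDegree]; omega
        rw [iterate_derivative_eq_zero this]
        simp
      · rfl
    have hne : laguerreDz n k z ≠ 0 := fun h => hcoeff (by simp [h])
    refine ⟨hne, le_antisymm ?_ (le_natDegree_of_ne_zero hcoeff)⟩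
    exact natDegree_le_iff_coeff_eq_zero.mpr hzero
  · intro hk
    apply iterate_derivative_eq_zero
    have hdeg : (laguerreBiv n).natDegree ≤ n := by
      apply natDegree_sum_le_of_forall_le
      intro i _
      refine natDegree_mul_le.trans ?_
      rw [natDegree_C, zero_add, lagP_map, (lagP_monic n i).natDegree_map, lagP_natDegree]
      omega
    omega
end
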